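/- arXiv:2605.02448 — 3 statements merged into one kernel-verified Lean document; each statement's English description precedes it below -/
import Mathlib

section
/- With H as above, for every common-shift direction h = (u,…,u) with u ≠ 0, the quadratic form equals ‖u‖²/τ² > 0; and H restricted to the zero-sum subspace { h : Σ_ℓ h_ℓ = 0 } is positive semidefinite if and only if τ² I_d - M ⪰ 0, i.e. τ² ≥ λ_max(M). -/
open Matrix Finset

/-- Pointwise description of the block entries of the quadratic form. -/
lemma entry_key (K d : ℕ) (hK0 : (K:ℝ) ≠ 0) (τ : ℝ) (hτ : τ ≠ 0)
    (M : Matrix (Fin d) (Fin d) ℝ) (h : Fin K → Fin d → ℝ) (k j : Fin K) :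
    h k ⬝ᵥ ((if k = j then
        (1 / ((K : ℝ) * τ ^ 2)) • (1 : Matrix (Fin d) (Fin d) ℝ)
          - (((K : ℝ) - 1) / ((K : ℝ) ^ 2 * τ ^ 4)) • M
      else (1 / ((K : ℝ) ^ 2 * τ ^ 4)) • M) *ᵥ h j)
      = (1 / ((K:ℝ) ^ 2 * τ ^ 4)) * (h k ⬝ᵥ M *ᵥ h j)
        + (if k = j then (1 / ((K:ℝ) * τ ^ 2)) * (h k ⬝ᵥ h k)
            - (1 / ((K:ℝ) * τ ^ 4)) * (h k ⬝ᵥ M *ᵥ h k) else 0) := by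
  by_cases hkj : k = j
  · subst hkj
    rw [if_pos rfl, if_pos rfl]
    simp only [sub_mulVec, smul_mulVec, one_mulVec,
      dotProduct_sub, dotProduct_smul, smul_eq_mul]
    generalize h k ⬝ᵥ h k = X
    generalize h k ⬝ᵥ M *ᵥ h k = Y
    field_simp
    ring
  · rw [if_neg hkj, if_neg hkj]
    simp only [smul_mulVec, dotProduct_smul, smul_eq_mul, add_zero]

lemma dp_sum {n ι : Type*} [Fintype n] (s : Finset ι) (u : n → ℝ) (f : ι → n → ℝ) :
    u ⬝ᵥ (∑ i ∈ s, f i) = ∑ i ∈ s, u ⬝ᵥ f i := by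
  simp only [dotProduct, Finset.sum_apply, Finset.mul_sum]
  exact Finset.sum_comm

lemma sum_dp {n ι : Type*} [Fintype n] (s : Finset ι) (u : n → ℝ) (f : ι → n → ℝ) :
    (∑ i ∈ s, f i) ⬝ᵥ u = ∑ i ∈ s, f i ⬝ᵥ u := by
  simp only [dotProduct, Finset.sum_apply, Finset.sum_mul]
  exact Finset.sum_comm

lemma mulVec_sum' {n ι : Type*} [Fintype n] (s : Finset ι)
    (M : Matrix n n ℝ) (f : ι → n → ℝ) :
    M *ᵥ (∑ i ∈ s, f i) = ∑ i ∈ s, M *ᵥ f i :=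
  map_sum M.mulVecLin f s

/-- Key identity for the full quadratic form. -/
lemma quad_key (K d : ℕ) (hK0 : (K:ℝ) ≠ 0) (τ : ℝ) (hτ : τ ≠ 0)
    (M : Matrix (Fin d) (Fin d) ℝ) (h : Fin K → Fin d → ℝ) :
    (∑ k, ∑ j, h k ⬝ᵥ ((if k = j then
        (1 / ((K : ℝ) * τ ^ 2)) • (1 : Matrix (Fin d) (Fin d) ℝ)
          - (((K : ℝ) - 1) / ((K : ℝ) ^ 2 * τ ^ 4)) • M
      else (1 / ((K : ℝ) ^ 2 * τ ^ 4)) • M) *ᵥ h j))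
    = (1 / ((K:ℝ) * τ ^ 2)) * ∑ k, h k ⬝ᵥ h k
      + (1 / ((K:ℝ) ^ 2 * τ ^ 4)) * ((∑ ℓ, h ℓ) ⬝ᵥ M *ᵥ (∑ ℓ, h ℓ))
      - (1 / ((K:ℝ) * τ ^ 4)) * ∑ k, h k ⬝ᵥ M *ᵥ h k := by
  have hs : (∑ ℓ, h ℓ) ⬝ᵥ M *ᵥ (∑ ℓ, h ℓ) = ∑ k, ∑ j, h k ⬝ᵥ M *ᵥ h j := by
    rw [sum_dp]
    refine Finset.sum_congr rfl fun k _ => ?_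
    rw [mulVec_sum', dp_sum]
  simp only [entry_key K d hK0 τ hτ M h]
  rw [hs]
  simp only [Finset.sum_add_distrib, Finset.sum_ite_eq, Finset.mem_univ, if_true,
    Finset.sum_sub_distrib, ← Finset.mul_sum]
  ring

/-- on common-shift directions the block-Hessian quadratic form equals
`‖u‖²/τ² > 0`, and positive semidefiniteness on the zero-sum subspace is equivalent
to `τ² I - M ⪰ 0`, i.e. to all eigenvalues of `M` being at most `τ²`. -/
theorem block_hessian_shift_and_zero_sum
    (K d : ℕ) (hK : 2 ≤ K) (hd : 1 ≤ d) (τ : ℝ) (hτ : 0 < τ)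
    (M : Matrix (Fin d) (Fin d) ℝ) (hsym : M.IsSymm) (hpsd : M.PosSemidef) :
    let H : Fin K → Fin K → Matrix (Fin d) (Fin d) ℝ := fun k j =>
      if k = j then
        (1 / ((K : ℝ) * τ ^ 2)) • (1 : Matrix (Fin d) (Fin d) ℝ)
          - (((K : ℝ) - 1) / ((K : ℝ) ^ 2 * τ ^ 4)) • M
      else (1 / ((K : ℝ) ^ 2 * τ ^ 4)) • M
    (∀ u : Fin d → ℝ, u ≠ 0 →
        (∑ k, ∑ j, u ⬝ᵥ (H k j) *ᵥ u) = (u ⬝ᵥ u) / τ ^ 2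
          ∧ 0 < (u ⬝ᵥ u) / τ ^ 2)
      ∧ (((∀ h : Fin K → (Fin d → ℝ), (∑ ℓ, h ℓ) = 0 →
              0 ≤ ∑ k, ∑ j, h k ⬝ᵥ (H k j) *ᵥ h j)
            ↔ (τ ^ 2 • (1 : Matrix (Fin d) (Fin d) ℝ) - M).PosSemidef)
          ∧ ((τ ^ 2 • (1 : Matrix (Fin d) (Fin d) ℝ) - M).PosSemidef
            ↔ ∀ i : Fin d, hpsd.1.eigenvalues i ≤ τ ^ 2)) := by
  intro H
  have hK0 : (K : ℝ) ≠ 0 := by positivity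
  have hKpos : (0:ℝ) < K := by positivity
  have hτ0 : τ ≠ 0 := ne_of_gt hτ
  have hH : H = fun k j =>
      if k = j then
        (1 / ((K : ℝ) * τ ^ 2)) • (1 : Matrix (Fin d) (Fin d) ℝ)
          - (((K : ℝ) - 1) / ((K : ℝ) ^ 2 * τ ^ 4)) • M
      else (1 / ((K : ℝ) ^ 2 * τ ^ 4)) • M := rfl
  have dp_nonneg : ∀ v : Fin d → ℝ, 0 ≤ v ⬝ᵥ v := fun v =>
    Finset.sum_nonneg fun i _ => mul_self_nonneg (v i)
  -- Hermitian of the difference matrix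
  have hN : (τ ^ 2 • (1 : Matrix (Fin d) (Fin d) ℝ) - M).IsHermitian := by
    simp [Matrix.IsHermitian, conjTranspose_sub, conjTranspose_smul, hsym.eq]
  -- quadratic form of the difference matrix
  have hNq : ∀ v : Fin d → ℝ,
      v ⬝ᵥ (τ ^ 2 • (1 : Matrix (Fin d) (Fin d) ℝ) - M) *ᵥ v
        = τ ^ 2 * (v ⬝ᵥ v) - v ⬝ᵥ M *ᵥ v := by
    intro v
    simp only [sub_mulVec, smul_mulVec, one_mulVec, dotProduct_sub,
      dotProduct_smul, smul_eq_mul]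
  refine ⟨?_, ?_, ?_⟩
  · -- common-shift directions
    intro u hu
    have hpos : 0 < u ⬝ᵥ u :=
      lt_of_le_of_ne (dp_nonneg u) (fun hc => hu (dotProduct_self_eq_zero.mp hc.symm))
    constructor
    · rw [hH, quad_key K d hK0 τ hτ0 M (fun _ => u)]
      have h1 : ∑ _k : Fin K, u ⬝ᵥ u = (K : ℝ) * (u ⬝ᵥ u) := by
        simp [Finset.sum_const, nsmul_eq_mul]
      have h2 : ∑ _k : Fin K, u ⬝ᵥ M *ᵥ u = (K : ℝ) * (u ⬝ᵥ M *ᵥ u) := by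
        simp [Finset.sum_const, nsmul_eq_mul]
      have h3 : (∑ _ℓ : Fin K, u) = (K : ℝ) • u := by
        simp [Finset.sum_const]
        ext i; simp [nsmul_eq_mul]
      rw [h1, h2, h3, mulVec_smul, smul_dotProduct, dotProduct_smul, smul_eq_mul, smul_eq_mul]
      field_simp
      ring
    · exact div_pos hpos (by positivity)
  · -- zero-sum PSD iff τ²I − M PSD
    constructor
    · intro hzs
      refine .of_dotProduct_mulVec_nonneg hN ?_
      intro v
      rw [star_trivial]
      set e0 : Fin K := ⟨0, by omega⟩
      set e1 : Fin K := ⟨1, by omega⟩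
      have he : e0 ≠ e1 := by simp [e0, e1, Fin.ext_iff]
      set h : Fin K → Fin d → ℝ := fun ℓ => (Pi.single e0 v : Fin K → Fin d → ℝ) ℓ + (Pi.single e1 (-v) : Fin K → Fin d → ℝ) ℓ with hh
      have hh0 : h e0 = v := by simp [hh, Pi.single_eq_of_ne' he.symm]
      have hh1 : h e1 = -v := by simp [hh, Pi.single_eq_of_ne' he]
      have hhk : ∀ k, k ≠ e0 → k ≠ e1 → h k = 0 := by
        intro k h0 h1
        simp [hh, Pi.single_eq_of_ne' (Ne.symm h0), Pi.single_eq_of_ne' (Ne.symm h1)]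
      have hsum0 : (∑ ℓ, h ℓ) = 0 := by
        simp only [hh, Finset.sum_add_distrib]
        rw [Fintype.sum_pi_single' e0 v, Fintype.sum_pi_single' e1 (-v)]
        simp
      have pairsum : ∀ F : Fin K → ℝ, (∀ k, k ≠ e0 → k ≠ e1 → F k = 0) →
          ∑ k, F k = F e0 + F e1 := by
        intro F hF
        rw [← Finset.sum_subset (Finset.subset_univ ({e0, e1} : Finset (Fin K)))
          (fun x _ hx => by
            simp only [Finset.mem_insert, Finset.mem_singleton, not_or] at hx
            exact hF x hx.1 hx.2)]
        rw [Finset.sum_pair he]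
      have hq := hzs h hsum0
      rw [hH, quad_key K d hK0 τ hτ0 M h, hsum0] at hq
      have e1s : ∑ k, h k ⬝ᵥ h k = 2 * (v ⬝ᵥ v) := by
        rw [pairsum _ (fun k h0 h1 => by rw [hhk k h0 h1]; simp)]
        rw [hh0, hh1]
        simp [dotProduct_neg, neg_dotProduct]
        ring
      have e2s : ∑ k, h k ⬝ᵥ M *ᵥ h k = 2 * (v ⬝ᵥ M *ᵥ v) := by
        rw [pairsum _ (fun k h0 h1 => by rw [hhk k h0 h1]; simp)]
        rw [hh0, hh1]
        simp [dotProduct_neg, neg_dotProduct, mulVec_neg]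
        ring
      rw [e1s, e2s] at hq
      simp only [zero_dotProduct, mul_zero, add_zero] at hq
      rw [hNq]
      have key : 1 / ((K:ℝ) * τ ^ 2) * (2 * (v ⬝ᵥ v)) - 1 / ((K:ℝ) * τ ^ 4) * (2 * (v ⬝ᵥ M *ᵥ v))
          = (2 / ((K:ℝ) * τ ^ 4)) * (τ ^ 2 * (v ⬝ᵥ v) - v ⬝ᵥ M *ᵥ v) := by
        field_simp
      rw [key] at hq
      have hc : (0:ℝ) < 2 / ((K:ℝ) * τ ^ 4) := by positivity
      nlinarith [hq, hc]
    · intro hNpsd h hsum0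
      rw [hH, quad_key K d hK0 τ hτ0 M h, hsum0]
      simp only [zero_dotProduct, mul_zero, add_zero]
      have key : 1 / ((K:ℝ) * τ ^ 2) * (∑ k, h k ⬝ᵥ h k)
            - 1 / ((K:ℝ) * τ ^ 4) * (∑ k, h k ⬝ᵥ M *ᵥ h k)
          = (1 / ((K:ℝ) * τ ^ 4)) * (∑ k, (τ ^ 2 * (h k ⬝ᵥ h k) - h k ⬝ᵥ M *ᵥ h k)) := by
        rw [Finset.sum_sub_distrib, ← Finset.mul_sum]
        field_simp
      rw [key]
      have : 0 ≤ ∑ k, (τ ^ 2 * (h k ⬝ᵥ h k) - h k ⬝ᵥ M *ᵥ h k) := by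
        refine Finset.sum_nonneg fun k _ => ?_
        have := hNpsd.dotProduct_mulVec_nonneg (h k)
        rwa [star_trivial, hNq] at this
      positivity
  · -- PSD of τ²I − M iff eigenvalues ≤ τ²
    constructor
    · intro hNpsd i
      set v : Fin d → ℝ := ⇑(hpsd.1.eigenvectorBasis i) with hv
      have hv0 : v ≠ 0 := by
        intro hc
        exact hpsd.1.eigenvectorBasis.orthonormal.ne_zero i (by
          apply PiLp.ext; intro j; exact congrFun hc j)
      have hvpos : 0 < v ⬝ᵥ v :=
        lt_of_le_of_ne (dp_nonneg v) (fun hc => hv0 (dotProduct_self_eq_zero.mp hc.symm))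
      have hMv : M *ᵥ v = hpsd.1.eigenvalues i • v := hpsd.1.mulVec_eigenvectorBasis i
      have hq := hNpsd.dotProduct_mulVec_nonneg v
      rw [star_trivial, hNq, hMv, dotProduct_smul, smul_eq_mul] at hq
      nlinarith [hq, hvpos]
    · intro hall
      set U : Matrix (Fin d) (Fin d) ℝ := (hpsd.1.eigenvectorUnitary : Matrix (Fin d) (Fin d) ℝ)
        with hUdef
      have hU : U * star U = 1 := Matrix.mem_unitaryGroup_iff.mp hpsd.1.eigenvectorUnitary.2
      have hDpsd : (diagonal (fun i => τ ^ 2 - hpsd.1.eigenvalues i)).PosSemidef :=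
        posSemidef_diagonal_iff.mpr fun i => sub_nonneg.mpr (hall i)
      have key : τ ^ 2 • (1 : Matrix (Fin d) (Fin d) ℝ) - M
          = U * diagonal (fun i => τ ^ 2 - hpsd.1.eigenvalues i) * (star U) := by
        have hsp : M = U * diagonal (RCLike.ofReal ∘ hpsd.1.eigenvalues) * star U :=
          hpsd.1.spectral_theorem
        have hd1 : diagonal (fun i => τ ^ 2 - hpsd.1.eigenvalues i)
            = diagonal (fun _ : Fin d => τ ^ 2) - diagonal (RCLike.ofReal ∘ hpsd.1.eigenvalues) := by
          rw [← diagonal_sub]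
          congr 1
        rw [hd1, Matrix.mul_sub, Matrix.sub_mul, ← hsp]
        congr 1
        rw [← Matrix.smul_one_eq_diagonal, mul_smul_comm, smul_mul_assoc, mul_one, hU]
      rw [key]
      have := hDpsd.mul_mul_conjTranspose_same U
      rwa [← Matrix.star_eq_conjTranspose] at this
end

section
/- Under the same setting, combining the previous bound with Pinsker's inequality and the identity D_KL(P ‖ P_L ⊗ P_Y) = I(L;Y), the Bayes misclassification probability satisfies P_err* ≥ 1 - 1/K - √(I(L;Y)/2). -/
open MeasureTheory
open scoped ENNReal
open Real Set

-- tangent line lemma for t ↦ t log t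
lemma fano_tangent {t t0 : ℝ} (ht : 0 ≤ t) (ht0 : 0 < t0) :
    t0 * Real.log t0 + (Real.log t0 + 1) * (t - t0) ≤ t * Real.log t := by
  rcases eq_or_lt_of_le ht with h | h
  · simp only [← h, Real.log_zero, mul_zero, zero_mul]
    nlinarith [ht0]
  · have hlog : Real.log t0 - Real.log t ≤ t0 / t - 1 := by
      have := Real.log_le_sub_one_of_pos (x := t0 / t) (by positivity)
      rwa [Real.log_div ht0.ne' h.ne'] at this
    have h2 : t * (t0 / t) = t0 := by field_simp
    nlinarith [mul_le_mul_of_nonneg_left hlog (le_of_lt h)]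

-- bound on |t log t|
lemma fano_abs_mul_log_le {t c : ℝ} (ht : 0 ≤ t) (htc : t ≤ c) (hc : 1 ≤ c) :
    |t * Real.log t| ≤ c * c := by
  rcases eq_or_lt_of_le ht with h | h
  · simp [← h]; nlinarith
  · rcases le_or_gt 1 t with h1 | h1
    · have hlt : 0 ≤ Real.log t := Real.log_nonneg h1
      rw [abs_of_nonneg (by positivity)]
      have : Real.log t ≤ t - 1 := Real.log_le_sub_one_of_pos h
      nlinarith
    · have hneg : Real.log t ≤ 0 := Real.log_nonpos ht h1.le
      rw [abs_of_nonpos (by nlinarith [mul_nonneg ht (neg_nonneg.2 hneg)])]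
      have hinv : Real.log t⁻¹ ≤ t⁻¹ - 1 := Real.log_le_sub_one_of_pos (by positivity)
      rw [Real.log_inv] at hinv
      have h2 : t * t⁻¹ = 1 := mul_inv_cancel₀ h.ne'
      nlinarith [mul_le_mul_of_nonneg_left hinv (le_of_lt h)]

lemma fano_pinsker_binary {p q : ℝ} (hp0 : 0 ≤ p) (hp1 : p ≤ 1) (hq0 : 0 < q) (hq1 : q < 1) :
    2 * (p - q) ^ 2 ≤ p * Real.log (p / q) + (1 - p) * Real.log ((1 - p) / (1 - q)) := by
  set u : ℝ → ℝ := fun x => Real.log x - Real.log (1 - x) - 4 * x with hu_def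
  set F : ℝ → ℝ := fun x => x * Real.log x - x * Real.log q + (1 - x) * Real.log (1 - x)
      - (1 - x) * Real.log (1 - q) - 2 * (x - q) ^ 2 with hF_def
  have hu_deriv : ∀ x ∈ Ioo (0:ℝ) 1, HasDerivAt u (x⁻¹ + (1 - x)⁻¹ - 4) x := by
    intro x hx
    have h1 : HasDerivAt Real.log x⁻¹ x := Real.hasDerivAt_log hx.1.ne'
    have h1x : HasDerivAt (fun x : ℝ => 1 - x) (-1) x := (hasDerivAt_id x).const_sub 1
    have h2 : HasDerivAt (fun x : ℝ => Real.log (1 - x)) (-1 / (1 - x)) x :=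
      h1x.log (by linarith [hx.2])
    have h3 : HasDerivAt (fun x : ℝ => 4 * x) 4 x := by
      simpa using (hasDerivAt_id x).const_mul 4
    have := (h1.sub h2).sub h3
    exact this.congr_deriv (by ring)
  have hu_mono : MonotoneOn u (Ioo (0:ℝ) 1) := by
    apply monotoneOn_of_deriv_nonneg (convex_Ioo 0 1)
    · exact fun x hx => ((hu_deriv x hx).continuousAt.continuousWithinAt)
    · intro x hx
      rw [interior_Ioo] at hx
      exact (hu_deriv x hx).differentiableAt.differentiableWithinAt
    · intro x hx
      rw [interior_Ioo] at hx
      rw [(hu_deriv x hx).deriv]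
      have hx0 := hx.1
      have hx1 : 0 < 1 - x := by linarith [hx.2]
      have key : x * (1 - x) ≤ 1 / 4 := by nlinarith [sq_nonneg (x - 1/2)]
      have : x⁻¹ + (1 - x)⁻¹ - 4 = (1 - 4 * (x * (1 - x))) / (x * (1 - x)) := by
        field_simp; ring
      rw [this]
      apply div_nonneg (by linarith) (by positivity)
  have hF_deriv : ∀ x ∈ Ioo (0:ℝ) 1, HasDerivAt F (u x - u q) x := by
    intro x hx
    have h1 : HasDerivAt (fun x : ℝ => x * Real.log x) (Real.log x + 1) x :=
      Real.hasDerivAt_mul_log hx.1.ne'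
    have h1x : HasDerivAt (fun x : ℝ => 1 - x) (-1) x := (hasDerivAt_id x).const_sub 1
    have h2 : HasDerivAt (fun x : ℝ => (1 - x) * Real.log (1 - x))
        ((Real.log (1 - x) + 1) * (-1)) x := by
      have hcomp := (Real.hasDerivAt_mul_log (x := 1 - x) (by intro h; rw [← h] at hx; linarith [hx.2, h])).comp x h1x
      simpa [Function.comp_def] using hcomp
    have h3 : HasDerivAt (fun x : ℝ => x * Real.log q) (Real.log q) x := by
      simpa using (hasDerivAt_id x).mul_const (Real.log q)
    have h4 : HasDerivAt (fun x : ℝ => (1 - x) * Real.log (1 - q)) (-Real.log (1 - q)) x := by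
      simpa using h1x.mul_const (Real.log (1 - q))
    have h5 : HasDerivAt (fun x : ℝ => 2 * (x - q) ^ 2) (2 * (2 * (x - q))) x := by
      have : HasDerivAt (fun x : ℝ => (x - q) ^ 2) (2 * (x - q)) x := by
        simpa using ((hasDerivAt_id x).sub_const q).fun_pow 2
      simpa using this.const_mul 2
    have := (((h1.sub h3).add h2).sub h4).sub h5
    exact this.congr_deriv (by simp only [hu_def]; ring)
  have hFcont : Continuous F := by
    have h1 : Continuous fun x : ℝ => x * Real.log x := Real.continuous_mul_log
    have h2 : Continuous fun x : ℝ => (1 - x) * Real.log (1 - x) :=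
      h1.comp (continuous_const.sub continuous_id)
    exact ((((h1.sub (continuous_id.mul continuous_const)).add h2).sub
      ((continuous_const.sub continuous_id).mul continuous_const)).sub
      ((continuous_const.mul ((continuous_id.sub continuous_const).pow 2))))
  have hqm : q ∈ Ioo (0:ℝ) 1 := ⟨hq0, hq1⟩
  have hFq : F q = 0 := by simp only [hF_def]; ring
  have hF_nonneg : 0 ≤ F p := by
    rcases le_or_gt p q with hpq | hpq
    · have hanti : AntitoneOn F (Icc 0 q) := by
        apply antitoneOn_of_deriv_nonpos (convex_Icc 0 q) hFcont.continuousOn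
        · intro x hx
          rw [interior_Icc] at hx
          exact (hF_deriv x ⟨hx.1, lt_trans hx.2 hq1⟩).differentiableAt.differentiableWithinAt
        · intro x hx
          rw [interior_Icc] at hx
          have hxm : x ∈ Ioo (0:ℝ) 1 := ⟨hx.1, lt_trans hx.2 hq1⟩
          rw [(hF_deriv x hxm).deriv]
          exact sub_nonpos.2 (hu_mono hxm hqm hx.2.le)
      have := hanti ⟨hp0, hpq⟩ ⟨hq0.le, le_refl q⟩ hpq
      rw [hFq] at this; exact this
    · have hmono : MonotoneOn F (Icc q 1) := by
        apply monotoneOn_of_deriv_nonneg (convex_Icc q 1) hFcont.continuousOn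
        · intro x hx
          rw [interior_Icc] at hx
          exact (hF_deriv x ⟨lt_trans hq0 hx.1, hx.2⟩).differentiableAt.differentiableWithinAt
        · intro x hx
          rw [interior_Icc] at hx
          have hxm : x ∈ Ioo (0:ℝ) 1 := ⟨lt_trans hq0 hx.1, hx.2⟩
          rw [(hF_deriv x hxm).deriv]
          exact sub_nonneg.2 (hu_mono hqm hxm hx.1.le)
      have := hmono ⟨le_refl q, hq1.le⟩ ⟨hpq.le, hp1⟩ hpq.le
      rw [hFq] at this; exact this
  have e1 : p * Real.log (p / q) = p * Real.log p - p * Real.log q := by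
    rcases eq_or_lt_of_le hp0 with h | h
    · simp [← h]
    · rw [Real.log_div h.ne' hq0.ne']; ring
  have e2 : (1 - p) * Real.log ((1 - p) / (1 - q)) =
      (1 - p) * Real.log (1 - p) - (1 - p) * Real.log (1 - q) := by
    rcases eq_or_lt_of_le hp1 with h | h
    · simp [h]
    · rw [Real.log_div (by linarith) (by linarith)]; ring
  simp only [hF_def] at hF_nonneg
  linarith

lemma fano_key {α : Type*} [MeasurableSpace α] (P' Q : Measure α)
    [IsProbabilityMeasure P'] [IsProbabilityMeasure Q]
    (c : ℝ≥0∞) (hc0 : c ≠ 0) (hctop : c ≠ ∞) (hc1 : 1 ≤ c.toReal)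
    (hle : P' ≤ c • Q) {A : Set α} (hA : MeasurableSet A) :
    (P' A).toReal * Real.log ((P' A).toReal / (Q A).toReal)
      + (P' Aᶜ).toReal * Real.log ((P' Aᶜ).toReal / (Q Aᶜ).toReal)
      ≤ ∫ x, Real.log ((P'.rnDeriv Q x).toReal) ∂P' := by
  have hac : P' ≪ Q := by
    intro s h0
    have h1 : P' s ≤ (c • Q) s := Measure.le_iff'.1 hle s
    rw [Measure.smul_apply, h0, smul_eq_mul, mul_zero] at h1
    exact le_antisymm h1 (zero_le)
  haveI : IsFiniteMeasure (c • Q) := by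
    constructor
    rw [Measure.smul_apply, smul_eq_mul]
    exact ENNReal.mul_lt_top hctop.lt_top (measure_lt_top Q _)
  have hbound : ∀ᵐ x ∂Q, P'.rnDeriv Q x ≤ c := by
    have h1 : P'.rnDeriv (c • Q) ≤ᵐ[c • Q] 1 := Measure.rnDeriv_le_one_of_le hle
    have h1' : P'.rnDeriv (c • Q) ≤ᵐ[Q] 1 := (Measure.absolutelyContinuous_smul hc0).ae_le h1
    have h2 := Measure.rnDeriv_smul_right_of_ne_top P' Q hc0 hctop
    filter_upwards [h1', h2] with x hx1 hx2
    rw [hx2, Pi.smul_apply, smul_eq_mul] at hx1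
    calc P'.rnDeriv Q x = c * (c⁻¹ * P'.rnDeriv Q x) := by
          rw [← mul_assoc, ENNReal.mul_inv_cancel hc0 hctop, one_mul]
      _ ≤ c * 1 := mul_le_mul_right hx1 c
      _ = c := mul_one c
  set g : α → ℝ := fun x => (P'.rnDeriv Q x).toReal with hg_def
  have hg_meas : Measurable g := (Measure.measurable_rnDeriv P' Q).ennreal_toReal
  have hgb : ∀ᵐ x ∂Q, g x ≤ c.toReal :=
    hbound.mono fun x hx => ENNReal.toReal_mono hctop hx
  have hφmeas : Measurable fun x => g x * Real.log (g x) :=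
    hg_meas.mul (Real.measurable_log.comp hg_meas)
  have hφint : Integrable (fun x => g x * Real.log (g x)) Q := by
    refine Integrable.mono' (integrable_const (c.toReal * c.toReal))
      hφmeas.aestronglyMeasurable ?_
    filter_upwards [hgb] with x hx
    exact fano_abs_mul_log_le ENNReal.toReal_nonneg hx hc1
  have hgint : Integrable g Q := by
    refine Integrable.mono' (integrable_const c.toReal) hg_meas.aestronglyMeasurable ?_
    filter_upwards [hgb] with x hx
    rwa [Real.norm_eq_abs, abs_of_nonneg ENNReal.toReal_nonneg]
  have hI : ∫ x, Real.log (g x) ∂P' = ∫ x, g x * Real.log (g x) ∂Q := by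
    rw [← integral_rnDeriv_smul hac (f := fun x => Real.log (g x))]
    simp [smul_eq_mul, hg_def]
  have hsetb : ∀ s : Set α, MeasurableSet s →
      (P' s).toReal * Real.log ((P' s).toReal / (Q s).toReal)
        ≤ ∫ x in s, g x * Real.log (g x) ∂Q := by
    intro s hs
    by_cases hps : P' s = 0
    · rw [hps]
      simp only [ENNReal.toReal_zero, zero_mul]
      have h0 : P'.rnDeriv Q =ᵐ[Q.restrict s] 0 := by
        rw [← lintegral_eq_zero_iff (Measure.measurable_rnDeriv P' Q)]
        rw [Measure.setLIntegral_rnDeriv hac s]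
        exact hps
      have hz : (fun x => g x * Real.log (g x)) =ᵐ[Q.restrict s] 0 := by
        filter_upwards [h0] with x hx
        simp [hg_def, hx]
      rw [integral_congr_ae hz]
      simp
    · have hps' : 0 < (P' s).toReal := ENNReal.toReal_pos hps (measure_ne_top _ _)
      have hqs : Q s ≠ 0 := fun h => hps (hac h)
      have hqs' : 0 < (Q s).toReal := ENNReal.toReal_pos hqs (measure_ne_top _ _)
      set ps := (P' s).toReal with hps_def
      set qs := (Q s).toReal with hqs_def
      set t0 : ℝ := ps / qs with ht0_def
      have ht0 : 0 < t0 := div_pos hps' hqs'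
      have hgs : ∫ x in s, g x ∂Q = ps := Measure.setIntegral_toReal_rnDeriv hac s
      have hlin : Integrable
          (fun x => (t0 * Real.log t0 - (Real.log t0 + 1) * t0) + (Real.log t0 + 1) * g x)
          (Q.restrict s) :=
        (integrable_const _).add (hgint.restrict.const_mul _)
      have hmono : ∫ x in s, ((t0 * Real.log t0 - (Real.log t0 + 1) * t0)
            + (Real.log t0 + 1) * g x) ∂Q
          ≤ ∫ x in s, g x * Real.log (g x) ∂Q := by
        refine integral_mono_ae hlin hφint.restrict ?_
        refine Filter.Eventually.of_forall fun x => ?_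
        show t0 * Real.log t0 - (Real.log t0 + 1) * t0 + (Real.log t0 + 1) * g x
          ≤ g x * Real.log (g x)
        have := fano_tangent (t := g x) ENNReal.toReal_nonneg ht0
        linarith
      have ht0qs : qs * t0 = ps := by rw [ht0_def]; field_simp
      have hcomp : ∫ x in s, ((t0 * Real.log t0 - (Real.log t0 + 1) * t0)
            + (Real.log t0 + 1) * g x) ∂Q = ps * Real.log t0 := by
        rw [integral_add (integrable_const _) (hgint.restrict.const_mul _),
          integral_const, integral_const_mul, hgs, measureReal_restrict_apply_univ, measureReal_def,
          smul_eq_mul]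
        linear_combination (Real.log t0 - (Real.log t0 + 1)) * ht0qs
      rw [hcomp] at hmono
      exact hmono
  calc (P' A).toReal * Real.log ((P' A).toReal / (Q A).toReal)
        + (P' Aᶜ).toReal * Real.log ((P' Aᶜ).toReal / (Q Aᶜ).toReal)
      ≤ (∫ x in A, g x * Real.log (g x) ∂Q) + ∫ x in Aᶜ, g x * Real.log (g x) ∂Q :=
        add_le_add (hsetb A hA) (hsetb Aᶜ hA.compl)
    _ = ∫ x, g x * Real.log (g x) ∂Q := integral_add_compl hA hφint
    _ = ∫ x, Real.log ((P'.rnDeriv Q x).toReal) ∂P' := hI.symm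

/-- with `L` uniform on `{0,…,K-1}` and mutual information
`I(L;Y) = D_KL(P_{L,Y} ‖ P_L ⊗ P_Y)`, the Bayes error satisfies
`P_err* ≥ 1 - 1/K - √(I(L;Y)/2)`. -/
theorem fano_type_mutual_information_bound
    (K d : ℕ) (hK : 2 ≤ K) (hd : 1 ≤ d)
    {Ω : Type*} [MeasurableSpace Ω] (P : Measure Ω) [IsProbabilityMeasure P]
    (L : Ω → Fin K) (Y : Ω → (Fin d → ℝ)) (hL : Measurable L) (hY : Measurable Y)
    (hunif : ∀ ℓ : Fin K, P {ω | L ω = ℓ} = 1 / (K : ℝ≥0∞)) :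
    let P' : Measure (Fin K × (Fin d → ℝ)) := P.map (fun ω => (L ω, Y ω))
    let Q : Measure (Fin K × (Fin d → ℝ)) := (P.map L).prod (P.map Y)
    let I : ℝ := ∫ x, Real.log ((P'.rnDeriv Q x).toReal) ∂P'
    1 - 1 / (K : ℝ) - Real.sqrt (I / 2)
      ≤ ⨅ ψ : {ψ : (Fin d → ℝ) → Fin K // Measurable ψ},
          (P {ω | ψ.1 (Y ω) ≠ L ω}).toReal := by
  intro P' Q I
  have hK0 : (K : ℝ≥0∞) ≠ 0 := by simp; omega
  have hKtop : (K : ℝ≥0∞) ≠ ∞ := ENNReal.natCast_ne_top K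
  have hK1 : (1 : ℝ) < (K : ℝ) := by exact_mod_cast hK.trans_lt' one_lt_two |>.trans_le le_rfl
  have hKpos : (0 : ℝ) < (K : ℝ) := by positivity
  haveI hPL : IsProbabilityMeasure (P.map L) := Measure.isProbabilityMeasure_map hL.aemeasurable
  haveI hPY : IsProbabilityMeasure (P.map Y) := Measure.isProbabilityMeasure_map hY.aemeasurable
  haveI hP' : IsProbabilityMeasure P' := Measure.isProbabilityMeasure_map (hL.prodMk hY).aemeasurable
  haveI hQ : IsProbabilityMeasure Q := by
    show IsProbabilityMeasure ((P.map L).prod (P.map Y)); infer_instance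
  haveI : Nonempty {ψ : (Fin d → ℝ) → Fin K // Measurable ψ} :=
    ⟨⟨fun _ => ⟨0, by omega⟩, measurable_const⟩⟩
  refine le_ciInf fun ψp => ?_
  obtain ⟨ψ, hψ⟩ := ψp
  set A : Set (Fin K × (Fin d → ℝ)) := {x | ψ x.2 = x.1} with hA_def
  have hA : MeasurableSet A := measurableSet_eq_fun (hψ.comp measurable_snd)
    measurable_fst
  have hmapL : ∀ ℓ : Fin K, (P.map L) {ℓ} = (K : ℝ≥0∞)⁻¹ := by
    intro ℓ
    rw [Measure.map_apply hL (measurableSet_singleton ℓ)]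
    have : L ⁻¹' {ℓ} = {ω | L ω = ℓ} := rfl
    rw [this, hunif ℓ, one_div]
  -- Q A = K⁻¹
  have hsum1 : ∑ ℓ : Fin K, (P.map Y) (ψ ⁻¹' {ℓ}) = 1 := by
    rw [sum_measure_preimage_singleton Finset.univ (fun y _ => hψ (measurableSet_singleton y))]
    simp
  have hQA : Q A = (K : ℝ≥0∞)⁻¹ := by
    show (P.map L).prod (P.map Y) A = _
    rw [Measure.prod_apply hA]
    have hsec : ∀ ℓ : Fin K, Prod.mk ℓ ⁻¹' A = ψ ⁻¹' {ℓ} := by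
      intro ℓ; ext y; simp [hA_def, eq_comm]
    simp_rw [hsec]
    rw [lintegral_fintype]
    simp_rw [hmapL]
    rw [← Finset.sum_mul, hsum1, one_mul]
  -- P' ≤ K • Q
  have hle : P' ≤ (K : ℝ≥0∞) • Q := by
    rw [Measure.le_iff]
    intro s hs
    have hsecm : ∀ ℓ : Fin K, MeasurableSet (Prod.mk ℓ ⁻¹' s) :=
      fun ℓ => measurable_prodMk_left hs
    have hQs : Q s = ∑ ℓ : Fin K, (P.map Y) (Prod.mk ℓ ⁻¹' s) * (K : ℝ≥0∞)⁻¹ := by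
      show (P.map L).prod (P.map Y) s = _
      rw [Measure.prod_apply hs, lintegral_fintype]
      simp_rw [hmapL]
    have hP's : P' s = P ((fun ω => (L ω, Y ω)) ⁻¹' s) :=
      Measure.map_apply (hL.prodMk hY) hs
    have hsub : (fun ω => (L ω, Y ω)) ⁻¹' s ⊆ ⋃ ℓ : Fin K, Y ⁻¹' (Prod.mk ℓ ⁻¹' s) := by
      intro ω hω
      exact Set.mem_iUnion.2 ⟨L ω, hω⟩
    calc P' s = P ((fun ω => (L ω, Y ω)) ⁻¹' s) := hP's
      _ ≤ P (⋃ ℓ : Fin K, Y ⁻¹' (Prod.mk ℓ ⁻¹' s)) := measure_mono hsub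
      _ ≤ ∑' ℓ : Fin K, P (Y ⁻¹' (Prod.mk ℓ ⁻¹' s)) := measure_iUnion_le _
      _ = ∑ ℓ : Fin K, P (Y ⁻¹' (Prod.mk ℓ ⁻¹' s)) := tsum_fintype _
      _ = ∑ ℓ : Fin K, (P.map Y) (Prod.mk ℓ ⁻¹' s) := by
          refine Finset.sum_congr rfl fun ℓ _ => ?_
          rw [Measure.map_apply hY (hsecm ℓ)]
      _ = ((K : ℝ≥0∞) • Q) s := by
          rw [Measure.smul_apply, smul_eq_mul, hQs, ← Finset.sum_mul]
          rw [show (K : ℝ≥0∞) * ((∑ ℓ : Fin K, (P.map Y) (Prod.mk ℓ ⁻¹' s)) * (K : ℝ≥0∞)⁻¹)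
              = (∑ ℓ : Fin K, (P.map Y) (Prod.mk ℓ ⁻¹' s)) * ((K : ℝ≥0∞) * (K : ℝ≥0∞)⁻¹) by ring]
          rw [ENNReal.mul_inv_cancel hK0 hKtop, mul_one]
  have hc1 : (1 : ℝ) ≤ ((K : ℝ≥0∞)).toReal := by
    simp only [ENNReal.toReal_natCast]; linarith
  have hkey := fano_key P' Q (K : ℝ≥0∞) hK0 hKtop hc1 hle hA
  -- real numbers
  set p : ℝ := (P' A).toReal with hp_def
  have hq_toReal : (Q A).toReal = (K : ℝ)⁻¹ := by
    rw [hQA, ENNReal.toReal_inv, ENNReal.toReal_natCast]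
  set q : ℝ := (K : ℝ)⁻¹ with hq_def
  have hq0 : 0 < q := by positivity
  have hq1 : q < 1 := by
    rw [hq_def]
    exact inv_lt_one_of_one_lt₀ hK1
  have hp0 : 0 ≤ p := ENNReal.toReal_nonneg
  have hp1 : p ≤ 1 := by
    have h := prob_le_one (μ := P') (s := A)
    have := ENNReal.toReal_mono ENNReal.one_ne_top h
    simpa using this
  have hPcompl : (P' Aᶜ).toReal = 1 - p := by
    rw [prob_compl_eq_one_sub hA, ENNReal.toReal_sub_of_le prob_le_one ENNReal.one_ne_top]
    simp [hp_def]
  have hQcompl : (Q Aᶜ).toReal = 1 - q := by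
    rw [prob_compl_eq_one_sub hA, ENNReal.toReal_sub_of_le prob_le_one ENNReal.one_ne_top,
      hQA, ENNReal.toReal_inv]
    simp [hq_def]
  rw [hq_toReal, hPcompl, hQcompl] at hkey
  have hpinsker := fano_pinsker_binary hp0 hp1 hq0 hq1
  have hIb : 2 * (p - q) ^ 2 ≤ I := le_trans hpinsker hkey
  have hsqrt : p - q ≤ Real.sqrt (I / 2) := by
    calc p - q ≤ |p - q| := le_abs_self _
      _ = Real.sqrt ((p - q) ^ 2) := (Real.sqrt_sq_eq_abs _).symm
      _ ≤ Real.sqrt (I / 2) := Real.sqrt_le_sqrt (by linarith)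
  have herr : (P {ω | ψ (Y ω) ≠ L ω}).toReal = 1 - p := by
    have hset : {ω | ψ (Y ω) ≠ L ω} = (fun ω => (L ω, Y ω)) ⁻¹' Aᶜ := by
      ext ω; simp [hA_def]
    rw [hset, ← Measure.map_apply (hL.prodMk hY) hA.compl]
    exact hPcompl
  show 1 - 1 / (K : ℝ) - Real.sqrt (I / 2) ≤ (P {ω | ψ (Y ω) ≠ L ω}).toReal
  rw [herr, one_div]
  linarith
end

section
/- With f as above and fixed a > 0, as σ → 0 one has f(σ) = (2/π)·(σ⁶/a⁶)·e^{-a²/σ²}·(1 + O(σ²/a²)). Equivalently, in SNR = a²/σ², f = (2/π)·e^{-SNR}·SNR^{-3}·(1 + O(SNR^{-1})) as SNR → ∞. -/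
open Real Filter Topology Asymptotics
open MeasureTheory Set

/-- The Gauss error function `erf x = (2/√π) ∫₀ˣ e^{-t²} dt`. -/
noncomputable def erf (x : ℝ) : ℝ :=
  (2 / Real.sqrt π) * ∫ t in (0 : ℝ)..x, Real.exp (-t ^ 2)

/-- The complementary error function. -/
noncomputable def erfc (x : ℝ) : ℝ := 1 - erf x

lemma integrableOn_aux (c0 c2 c4 c6 x : ℝ) (hx : 0 < x) :
    IntegrableOn (fun t => Real.exp (-t^2) * (c0 + c2/t^2 + c4/t^4 + c6/t^6)) (Ioi x) := by
  have hg : IntegrableOn (fun t : ℝ => (|c0| + |c2|/x^2 + |c4|/x^4 + |c6|/x^6) * Real.exp (-t^2))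
      (Ioi x) := by
    have := ((integrable_exp_neg_mul_sq (b := 1) one_pos).integrableOn (s := Ioi x)).const_mul
      (|c0| + |c2|/x^2 + |c4|/x^4 + |c6|/x^6)
    simp at this; exact this
  refine hg.mono' ?_ ?_
  · apply ContinuousOn.aestronglyMeasurable ?_ measurableSet_Ioi
    have h2 : ∀ t ∈ Ioi x, t ≠ 0 := fun t ht => ne_of_gt (hx.trans ht)
    refine ContinuousOn.mul (Continuous.continuousOn (by continuity)) ?_
    refine ContinuousOn.add (ContinuousOn.add (ContinuousOn.add continuousOn_const ?_) ?_) ?_ <;>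
      exact continuousOn_const.div (continuousOn_pow _) (fun t ht => pow_ne_zero _ (h2 t ht))
  · filter_upwards [ae_restrict_mem measurableSet_Ioi] with t ht
    have htx : x ≤ t := le_of_lt ht
    have ht0 : 0 < t := hx.trans ht
    rw [norm_mul, Real.norm_eq_abs, Real.norm_eq_abs, abs_of_pos (Real.exp_pos _), mul_comm]
    gcongr
    calc |c0 + c2/t^2 + c4/t^4 + c6/t^6| ≤ |c0| + |c2|/t^2 + |c4|/t^4 + |c6|/t^6 := by
          refine (abs_add_le _ _).trans ?_
          gcongr
          refine (abs_add_le _ _).trans ?_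
          gcongr
          refine (abs_add_le _ _).trans ?_
          simp [abs_div, abs_pow, abs_of_pos ht0]
          all_goals simp [abs_div, abs_pow, abs_of_pos ht0]
      _ ≤ |c0| + |c2|/x^2 + |c4|/x^4 + |c6|/x^6 := by gcongr <;> positivity

lemma ftc_tail (c1 c3 c5 x : ℝ) (hx : 0 < x) :
    ∫ t in Ioi x, Real.exp (-t^2) *
      ((2*c1) + (2*c3 + c1)/t^2 + (2*c5 + 3*c3)/t^4 + (5*c5)/t^6)
      = Real.exp (-x^2) * (c1/x + c3/x^3 + c5/x^5) := by
  set F : ℝ → ℝ := fun t => -(Real.exp (-t^2) * (c1/t + c3/t^3 + c5/t^5)) with hF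
  have hderiv : ∀ t ∈ Ici x, HasDerivAt F
      (Real.exp (-t^2) * ((2*c1) + (2*c3 + c1)/t^2 + (2*c5 + 3*c3)/t^4 + (5*c5)/t^6)) t := by
    intro t ht
    have ht0 : 0 < t := lt_of_lt_of_le hx ht
    have hne : t ≠ 0 := ne_of_gt ht0
    have he : HasDerivAt (fun t : ℝ => Real.exp (-t^2)) (Real.exp (-t^2) * (-(2*t))) t := by
      have h1 : HasDerivAt (fun t : ℝ => -t^2) (-(2*t)) t := by
        exact (hasDerivAt_pow 2 t).neg.congr_deriv (by simp)
      exact h1.exp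
    have hp : HasDerivAt (fun t : ℝ => c1/t + c3/t^3 + c5/t^5)
        (-(c1/t^2) + -(3*c3/t^4) + -(5*c5/t^6)) t := by
      have h1 : HasDerivAt (fun t : ℝ => c1/t) (-(c1/t^2)) t := by
        have := (hasDerivAt_const t c1).div (hasDerivAt_id t) hne
        exact this.congr_deriv (by simp; field_simp)
      have h3 : HasDerivAt (fun t : ℝ => c3/t^3) (-(3*c3/t^4)) t := by
        have := (hasDerivAt_const t c3).div (hasDerivAt_pow 3 t) (pow_ne_zero _ hne)
        exact this.congr_deriv (by field_simp; ring)
      have h5 : HasDerivAt (fun t : ℝ => c5/t^5) (-(5*c5/t^6)) t := by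
        have := (hasDerivAt_const t c5).div (hasDerivAt_pow 5 t) (pow_ne_zero _ hne)
        exact this.congr_deriv (by field_simp; ring)
      exact (h1.add h3).add h5
    have := (he.mul hp).neg
    exact this.congr_deriv (by field_simp; ring)
  have htend : Tendsto F atTop (𝓝 0) := by
    have he : Tendsto (fun t : ℝ => Real.exp (-t^2)) atTop (𝓝 0) := by
      apply Real.tendsto_exp_atBot.comp
      have : Tendsto (fun t : ℝ => t^2) atTop atTop := tendsto_pow_atTop (by norm_num)
      exact tendsto_neg_atBot_iff.mpr this
    have hp : Tendsto (fun t : ℝ => c1/t + c3/t^3 + c5/t^5) atTop (𝓝 (0 + 0 + 0)) := by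
      refine Tendsto.add (Tendsto.add ?_ ?_) ?_
      · exact tendsto_const_nhds.div_atTop tendsto_id
      · exact tendsto_const_nhds.div_atTop (tendsto_pow_atTop (by norm_num))
      · exact tendsto_const_nhds.div_atTop (tendsto_pow_atTop (by norm_num))
    have := (he.mul hp).neg
    simpa using this
  have hint := integrableOn_aux (2*c1) (2*c3+c1) (2*c5+3*c3) (5*c5) x hx
  have := integral_Ioi_of_hasDerivAt_of_tendsto' hderiv hint htend
  rw [this, hF]
  ring

lemma gauss_integrable : MeasureTheory.Integrable (fun t : ℝ => Real.exp (-t ^ 2)) := by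
  simpa using integrable_exp_neg_mul_sq (b := 1) one_pos

lemma erfc_eq_tail (x : ℝ) : erfc x = (2 / Real.sqrt π) * ∫ t in Ioi x, Real.exp (-t ^ 2) := by
  have hπ : Real.sqrt π ≠ 0 := ne_of_gt (Real.sqrt_pos.mpr Real.pi_pos)
  have htot : (∫ t : ℝ, Real.exp (-t ^ 2)) = Real.sqrt π := by
    have := integral_gaussian 1
    simpa using this
  have hIoi0 : (∫ t in Ioi (0:ℝ), Real.exp (-t ^ 2)) = Real.sqrt π / 2 := by
    have := integral_gaussian_Ioi 1
    simpa using this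
  have hsplit : ∀ y : ℝ, (∫ t in Iic y, Real.exp (-t ^ 2)) + (∫ t in Ioi y, Real.exp (-t ^ 2))
      = Real.sqrt π := by
    intro y
    rw [← htot, ← MeasureTheory.setIntegral_union (Iic_disjoint_Ioi le_rfl) measurableSet_Ioi
      gauss_integrable.integrableOn gauss_integrable.integrableOn, Iic_union_Ioi, MeasureTheory.setIntegral_univ]
  have hiv : (∫ t in (0:ℝ)..x, Real.exp (-t ^ 2))
      = (∫ t in Iic x, Real.exp (-t ^ 2)) - (∫ t in Iic (0:ℝ), Real.exp (-t ^ 2)) := by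
    rw [← intervalIntegral.integral_Iic_sub_Iic gauss_integrable.integrableOn gauss_integrable.integrableOn]
  have hIic0 : (∫ t in Iic (0:ℝ), Real.exp (-t ^ 2)) = Real.sqrt π / 2 := by
    have := hsplit 0
    rw [hIoi0] at this
    linarith
  have hx' : (∫ t in Iic x, Real.exp (-t ^ 2)) = Real.sqrt π - ∫ t in Ioi x, Real.exp (-t ^ 2) := by
    have := hsplit x; linarith
  rw [erfc, erf, hiv, hIic0, hx']
  field_simp
  ring

lemma tail_lower (x : ℝ) (hx : 0 < x) :
    Real.exp (-x^2) * ((1/2)/x + (-(1/4))/x^3 + 0/x^5)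
      ≤ ∫ t in Ioi x, Real.exp (-t ^ 2) := by
  rw [← ftc_tail (1/2) (-(1/4)) 0 x hx]
  apply setIntegral_mono_on (integrableOn_aux _ _ _ _ x hx)
    gauss_integrable.integrableOn measurableSet_Ioi
  intro t ht
  have ht0 : 0 < t := hx.trans ht
  have he := Real.exp_pos (-t^2)
  have h4 : 0 < t^4 := by positivity
  have key : 2 * (1/2:ℝ) + (2 * -(1/4) + 1/2) / t^2 + (2 * 0 + 3 * -(1/4)) / t^4 + 5 * 0 / t^6
      ≤ 1 := by
    have : (0:ℝ) ≤ (3/4) / t^4 := by positivity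
    have h0 : (2 * -(1/4:ℝ) + 1/2) = 0 := by norm_num
    rw [h0]
    norm_num
    rw [neg_div]
    linarith
  nlinarith [key, he]

lemma tail_upper (x : ℝ) (hx : 0 < x) :
    (∫ t in Ioi x, Real.exp (-t ^ 2))
      ≤ Real.exp (-x^2) * ((1/2)/x + (-(1/4))/x^3 + (3/8)/x^5) := by
  rw [← ftc_tail (1/2) (-(1/4)) (3/8) x hx]
  apply setIntegral_mono_on gauss_integrable.integrableOn
    (integrableOn_aux _ _ _ _ x hx) measurableSet_Ioi
  intro t ht
  have ht0 : 0 < t := hx.trans ht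
  have he := Real.exp_pos (-t^2)
  have h6 : 0 < t^6 := by positivity
  have h2 : 0 < t^2 := by positivity
  have h4 : 0 < t^4 := by positivity
  have key : (1:ℝ) ≤ 2 * (3/8*2) / (3/8*2) := by norm_num
  have key2 : (1:ℝ) ≤ 2 * (1/2:ℝ) + (2 * -(1/4) + 1/2) / t^2 + (2 * (3/8) + 3 * -(1/4)) / t^4
      + 5 * (3/8) / t^6 := by
    have h0 : (0:ℝ) ≤ 5 * (3/8) / t^6 := by positivity
    norm_num
    linarith
  nlinarith [key2, he]

lemma sandwich_aux (K s u : ℝ) (hK0 : 0 < K) (hs0 : 0 < s) (hs4 : s < 1/4)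
    (hub : u ≤ K * (1 - s + 3*s^2)) (hlb : K * (1 - s) ≤ u) :
    (K - u)^2 ≤ K^2 * s^2 ∧ K^2 * s^2 - (K - u)^2 ≤ 6 * (s * (K^2 * s^2)) := by
  have hlow : K * (s - 3*s^2) ≤ K - u := by nlinarith
  have hhigh : K - u ≤ K * s := by nlinarith
  have hnn : 0 ≤ K * (s - 3*s^2) := by nlinarith
  have hsq_up : (K - u)^2 ≤ (K*s)^2 := pow_le_pow_left₀ (hnn.trans hlow) hhigh 2
  have hsq_lo : (K * (s - 3*s^2))^2 ≤ (K - u)^2 := pow_le_pow_left₀ hnn hlow 2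
  constructor
  · nlinarith [hsq_up]
  · nlinarith [hsq_lo, sq_nonneg (K*s^2)]

set_option maxHeartbeats 1000000 in
/-- high-SNR asymptotics of the normalized hard-assignment error:
with `f(σ) = (1/a²)(√(2/π)·σ·e^{-a²/(2σ²)} - a·erfc(a/(√2σ)))²`, as `σ → 0⁺`
`f(σ) = (2/π)·(σ⁶/a⁶)·e^{-a²/σ²}·(1 + O(σ²/a²))`. -/
theorem hard_assignment_error_high_snr_asymptotics
    (a : ℝ) (ha : 0 < a) :
    let f : ℝ → ℝ := fun σ =>
      (1 / a ^ 2) * (Real.sqrt (2 / π) * σ * Real.exp (-a ^ 2 / (2 * σ ^ 2))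
        - a * erfc (a / (Real.sqrt 2 * σ))) ^ 2
    let g : ℝ → ℝ := fun σ => (2 / π) * (σ ^ 6 / a ^ 6) * Real.exp (-a ^ 2 / σ ^ 2)
    (fun σ => f σ - g σ) =O[nhdsWithin 0 (Set.Ioi 0)] fun σ => (σ ^ 2 / a ^ 2) * g σ := by
  intro f g
  have hf : ∀ τ : ℝ, f τ = (1 / a ^ 2) * (Real.sqrt (2 / π) * τ * Real.exp (-a ^ 2 / (2 * τ ^ 2))
      - a * erfc (a / (Real.sqrt 2 * τ))) ^ 2 := fun τ => rfl
  have hgdef : ∀ τ : ℝ, g τ = (2 / π) * (τ ^ 6 / a ^ 6) * Real.exp (-a ^ 2 / τ ^ 2) :=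
    fun τ => rfl
  rw [isBigO_iff]
  refine ⟨6, ?_⟩
  filter_upwards [Ioo_mem_nhdsGT_of_mem (show (0:ℝ) ∈ Ico 0 (a/2) by
    constructor <;> [rfl; positivity])] with σ hσ
  have hσ0 : 0 < σ := hσ.1
  have hσa : σ < a / 2 := hσ.2
  have hπ0 : (0:ℝ) < π := Real.pi_pos
  have hsqπ : 0 < Real.sqrt π := Real.sqrt_pos.mpr hπ0
  have hsq2 : 0 < Real.sqrt 2 := Real.sqrt_pos.mpr two_pos
  have h22 : Real.sqrt 2 ^ 2 = 2 := Real.sq_sqrt (by norm_num)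
  have h23 : Real.sqrt 2 ^ 3 = 2 * Real.sqrt 2 := by
    rw [pow_succ, h22]
  have h24 : Real.sqrt 2 ^ 4 = 4 := by
    rw [show (4:ℕ) = 2*2 from rfl, pow_mul, h22]; norm_num
  have h25 : Real.sqrt 2 ^ 5 = 4 * Real.sqrt 2 := by
    rw [pow_succ, h24]
  have h2π : Real.sqrt (2/π) = Real.sqrt 2 / Real.sqrt π := Real.sqrt_div (by norm_num) π
  obtain ⟨x, hxdef⟩ : ∃ x : ℝ, x = a / (Real.sqrt 2 * σ) := ⟨_, rfl⟩
  have hx : 0 < x := by rw [hxdef]; positivity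
  have hx2 : -x^2 = -a^2/(2*σ^2) := by
    rw [hxdef, div_pow, mul_pow, h22]
    ring
  obtain ⟨E, hEdef⟩ : ∃ E : ℝ, E = Real.exp (-a^2/(2*σ^2)) := ⟨_, rfl⟩
  have hE : Real.exp (-x^2) = E := by rw [hx2, hEdef]
  obtain ⟨K, hKdef⟩ : ∃ K : ℝ, K = Real.sqrt (2/π) * σ * E := ⟨_, rfl⟩
  obtain ⟨s, hsdef⟩ : ∃ s : ℝ, s = σ^2/a^2 := ⟨_, rfl⟩
  have hs0 : 0 < s := by rw [hsdef]; positivity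
  have hs4 : s < 1/4 := by
    rw [hsdef, div_lt_iff₀ (by positivity)]
    nlinarith
  have hE0 : 0 < E := hEdef ▸ Real.exp_pos _
  have hsq2π : 0 < Real.sqrt (2/π) := Real.sqrt_pos.mpr (by positivity)
  have hK0 : 0 < K := by
    rw [hKdef]
    exact mul_pos (mul_pos hsq2π hσ0) hE0
  have ha' : a ≠ 0 := ne_of_gt ha
  have ha2 : (0:ℝ) < a^2 := by positivity
  have hσ' : σ ≠ 0 := ne_of_gt hσ0
  have e1 : (1/2)/x = Real.sqrt 2 * σ / (2*a) := by
    rw [hxdef]; field_simp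
  have e3 : (-(1/4))/x^3 = -(Real.sqrt 2 * σ^3 / (2*a^3)) := by
    rw [hxdef, div_pow, mul_pow, h23]; field_simp; ring
  have e5 : (3/8)/x^5 = 3 * (Real.sqrt 2 * σ^5) / (2*a^5) := by
    rw [hxdef, div_pow, mul_pow, h25]; field_simp; ring
  obtain ⟨u, hudef⟩ : ∃ u : ℝ, u = a * erfc x := ⟨_, rfl⟩
  -- upper bound on u
  have hub : u ≤ K * (1 - s + 3*s^2) := by
    have h1 := tail_upper x hx
    have h2 : erfc x ≤ (2 / Real.sqrt π) *
        (Real.exp (-x^2) * ((1/2)/x + (-(1/4))/x^3 + (3/8)/x^5)) := by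
      rw [erfc_eq_tail x]
      exact mul_le_mul_of_nonneg_left h1 (by positivity)
    have h3 : u ≤ a * ((2 / Real.sqrt π) *
        (Real.exp (-x^2) * ((1/2)/x + (-(1/4))/x^3 + (3/8)/x^5))) := by
      rw [hudef]
      exact mul_le_mul_of_nonneg_left h2 ha.le
    refine h3.trans_eq ?_
    rw [hE, e1, e3, e5, hKdef, h2π, hsdef]
    field_simp
    ring
  -- lower bound on u
  have hlb : K * (1 - s) ≤ u := by
    have h1 := tail_lower x hx
    have h2 : (2 / Real.sqrt π) *
        (Real.exp (-x^2) * ((1/2)/x + (-(1/4))/x^3 + 0/x^5)) ≤ erfc x := by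
      rw [erfc_eq_tail x]
      exact mul_le_mul_of_nonneg_left h1 (by positivity)
    have h3 : a * ((2 / Real.sqrt π) *
        (Real.exp (-x^2) * ((1/2)/x + (-(1/4))/x^3 + 0/x^5))) ≤ u := by
      rw [hudef]
      exact mul_le_mul_of_nonneg_left h2 ha.le
    refine le_trans (le_of_eq ?_) h3
    rw [hE, e1, e3, hKdef, h2π, hsdef]
    field_simp
    ring
  have hE2 : E^2 = Real.exp (-a^2/σ^2) := by
    rw [hEdef, sq, ← Real.exp_add]
    congr 1
    field_simp
    ring
  have hgK : g σ = K^2 * s^2 / a^2 := by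
    rw [hgdef, hKdef, hsdef, mul_pow, mul_pow, Real.sq_sqrt (by positivity : (0:ℝ) ≤ 2/π), hE2]
    field_simp
  have hfK : f σ = (K - u)^2 / a^2 := by
    rw [hf, hKdef, hudef, hEdef, hxdef]
    ring
  obtain ⟨hsq_up, hsq_lo6⟩ := sandwich_aux K s u hK0 hs0 hs4 hub hlb
  have hg0 : 0 < g σ := by
    rw [hgK]
    exact div_pos (mul_pos (pow_pos hK0 2) (pow_pos hs0 2)) ha2
  have hA : f σ - g σ ≤ 0 := by
    rw [hfK, hgK, sub_nonpos]
    exact div_le_div_of_nonneg_right hsq_up ha2.le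
  have hB : g σ - f σ ≤ 6 * (s * g σ) := by
    rw [hfK, hgK, div_sub_div_same,
      show 6 * (s * (K^2 * s^2 / a^2)) = (6 * (s * (K^2 * s^2)))/a^2 by ring]
    exact div_le_div_of_nonneg_right hsq_lo6 ha2.le
  rw [Real.norm_eq_abs, Real.norm_eq_abs, abs_of_nonpos hA,
    abs_of_pos (mul_pos (show (0:ℝ) < σ^2/a^2 by positivity) hg0), ← hsdef, neg_sub]
  exact hB
end
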